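/- Let n ≥ 2, let A be a real n×n singular irreducible M-matrix, and let L_G and U_G be the FSAI factors associated with the complete patterns S_L = {(i,j) : i ≥ j} \ {(n,n−1)} and S_U = {(i,j) : i ≤ j} \ {(n−1,n)}. With d_i = (L_G A U_G)_{ii} and D^− = diag(d_1^{−1}, …, d_{n−1}^{−1}, 0) and Â = U_G D^− L_G, one has Â A Â = Â. -/

import Mathlib

open Matrix

/-- The spectral radius of a real matrix: the maximum modulus of its complex
eigenvalues (supremum of moduli of elements of the complex spectrum). -/
noncomputable def specRad {n : ℕ} (B : Matrix (Fin n) (Fin n) ℝ) : ℝ :=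
  sSup ((fun z : ℂ => ‖z‖) '' spectrum ℂ (B.map Complex.ofReal))

/-- A real square matrix is a Z-matrix if its off-diagonal entries are nonpositive. -/
def IsZMatrix {n : ℕ} (A : Matrix (Fin n) (Fin n) ℝ) : Prop :=
  ∀ i j, i ≠ j → A i j ≤ 0

/-- A Z-matrix `A` is a nonsingular M-matrix if `A = s • 1 - B` with `B`
entrywise nonnegative and `s > ρ(B)`. -/
def IsNonsingularMMatrix {n : ℕ} (A : Matrix (Fin n) (Fin n) ℝ) : Prop :=
  IsZMatrix A ∧ ∃ (s : ℝ) (B : Matrix (Fin n) (Fin n) ℝ),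
    (∀ i j, 0 ≤ B i j) ∧ specRad B < s ∧ A = s • (1 : Matrix (Fin n) (Fin n) ℝ) - B

/-- A Z-matrix `A` is a singular M-matrix if `A = ρ(B) • 1 - B` with `B`
entrywise nonnegative. -/
def IsSingularMMatrix {n : ℕ} (A : Matrix (Fin n) (Fin n) ℝ) : Prop :=
  IsZMatrix A ∧ ∃ B : Matrix (Fin n) (Fin n) ℝ,
    (∀ i j, 0 ≤ B i j) ∧ A = specRad B • (1 : Matrix (Fin n) (Fin n) ℝ) - B

/-- A matrix is irreducible if its directed graph (edge `i → j` iff `A i j ≠ 0`)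
is strongly connected. -/
def IsIrreducibleMatrix {n : ℕ} (A : Matrix (Fin n) (Fin n) ℝ) : Prop :=
  ∀ i j : Fin n, Relation.ReflTransGen (fun a b : Fin n => A a b ≠ 0) i j

/-- Lower triangular real matrix. -/
def IsLowerTri {n : ℕ} (L : Matrix (Fin n) (Fin n) ℝ) : Prop :=
  ∀ i j : Fin n, i < j → L i j = 0

/-- Upper triangular real matrix. -/
def IsUpperTri {n : ℕ} (U : Matrix (Fin n) (Fin n) ℝ) : Prop :=
  ∀ i j : Fin n, j < i → U i j = 0

/-- `L` is an FSAI lower triangular factor of `A` for the pattern `S`: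
`L` is lower triangular, vanishes off the pattern, and `(L * A) i j = δ i j`
on the pattern. -/
def IsFSAILowerFactor {n : ℕ} (A L : Matrix (Fin n) (Fin n) ℝ)
    (S : Set (Fin n × Fin n)) : Prop :=
  IsLowerTri L ∧ (∀ p : Fin n × Fin n, p ∉ S → L p.1 p.2 = 0) ∧
    ∀ p : Fin n × Fin n, p ∈ S → (L * A) p.1 p.2 = if p.1 = p.2 then 1 else 0

/-- `U` is an FSAI upper triangular factor of `A` for the pattern `S`:
`U` is upper triangular, vanishes off the pattern, and `(A * U) i j = δ i j`
on the pattern. -/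
def IsFSAIUpperFactor {n : ℕ} (A U : Matrix (Fin n) (Fin n) ℝ)
    (S : Set (Fin n × Fin n)) : Prop :=
  IsUpperTri U ∧ (∀ p : Fin n × Fin n, p ∉ S → U p.1 p.2 = 0) ∧
    ∀ p : Fin n × Fin n, p ∈ S → (A * U) p.1 p.2 = if p.1 = p.2 then 1 else 0

theorem fsai_two_inverse (n : ℕ) (hn : 2 ≤ n)
    (A : Matrix (Fin n) (Fin n) ℝ)
    (hA : IsSingularMMatrix A) (hirr : IsIrreducibleMatrix A)
    (L U : Matrix (Fin n) (Fin n) ℝ)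
    (hL : IsFSAILowerFactor A L
      ({p : Fin n × Fin n | p.2 ≤ p.1} \
        {((⟨n - 1, by omega⟩ : Fin n), (⟨n - 2, by omega⟩ : Fin n))}))
    (hU : IsFSAIUpperFactor A U
      ({p : Fin n × Fin n | p.1 ≤ p.2} \
        {((⟨n - 2, by omega⟩ : Fin n), (⟨n - 1, by omega⟩ : Fin n))}))
    (Dm : Matrix (Fin n) (Fin n) ℝ)
    (hDm : Dm = Matrix.diagonal (fun i : Fin n =>
      if i = (⟨n - 1, by omega⟩ : Fin n) then 0 else ((L * A * U) i i)⁻¹))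
    (Ahat : Matrix (Fin n) (Fin n) ℝ)
    (hAhat : Ahat = U * Dm * L) :
    Ahat * A * Ahat = Ahat := by
  obtain ⟨hLtri, hLz, hLA⟩ := hL
  obtain ⟨hUtri, hUz, hAU⟩ := hU
  set e : Fin n := ⟨n - 1, by omega⟩ with he
  set f : Fin n := ⟨n - 2, by omega⟩ with hf
  set M : Matrix (Fin n) (Fin n) ℝ := L * A * U with hM
  have hLAent : ∀ i k : Fin n, k ≤ i → i ≠ e → (L * A) i k = if i = k then 1 else 0 := by
    intro i k hk hi
    exact hLA (i, k) ⟨hk, fun h => hi (congrArg Prod.fst h)⟩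
  have hAUent : ∀ k j : Fin n, k ≤ j → j ≠ e → (A * U) k j = if k = j then 1 else 0 := by
    intro k j hk hj
    exact hAU (k, j) ⟨hk, fun h => hj (congrArg Prod.snd h)⟩
  have hMoff : ∀ i j : Fin n, i ≠ j → i ≠ e → j ≠ e → M i j = 0 := by
    intro i j hij hi hj
    rcases lt_or_gt_of_ne hij with h | h
    · have hrw : M i j = ∑ k, L i k * (A * U) k j := by
        rw [hM, Matrix.mul_assoc, Matrix.mul_apply]
      rw [hrw]
      apply Finset.sum_eq_zero
      intro k _
      rcases le_or_gt k i with hk | hk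
      · rw [hAUent k j (hk.trans h.le) hj, if_neg (ne_of_lt (lt_of_le_of_lt hk h)),
          mul_zero]
      · rw [hLtri i k hk, zero_mul]
    · have hrw : M i j = ∑ k, (L * A) i k * U k j := by
        rw [hM, Matrix.mul_apply]
      rw [hrw]
      apply Finset.sum_eq_zero
      intro k _
      rcases le_or_gt k j with hk | hk
      · rw [hLAent i k (hk.trans h.le) hi, if_neg (ne_of_gt (lt_of_le_of_lt hk h)),
          zero_mul]
      · rw [hUtri k j hk, mul_zero]
  have key : Dm * M * Dm = Dm := by
    rw [hDm]
    ext i j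
    rw [Matrix.mul_diagonal, Matrix.diagonal_mul]
    by_cases hij : i = j
    · subst hij
      rw [Matrix.diagonal_apply_eq]
      by_cases hi : i = e
      · simp [hi]
      · simp only [if_neg hi]
        rcases eq_or_ne (M i i) 0 with h0 | h0
        · simp [h0]
        · rw [inv_mul_cancel₀ h0, one_mul]
    · rw [Matrix.diagonal_apply_ne _ hij]
      by_cases hi : i = e
      · simp [hi]
      · by_cases hj : j = e
        · simp [hj]
        · rw [hMoff i j hij hi hj]; ring
  have hassoc : U * Dm * L * A * (U * Dm * L) = U * (Dm * M * Dm) * L := by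
    rw [hM]; noncomm_ring
  rw [hAhat, hassoc, key, Matrix.mul_assoc]
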